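/- Let Act be a finite event set and Γ a set of Hennessy–Milner logic formulas such that every finite subset Δ ⊆ Γ is satisfied by some pointed labelled transition system (i.e., there is a pointed labelled transition system (L,l) with (L,l) ⊨ᵃ δ for all δ ∈ Δ). Then there exists a pointed labelled transition system (L*,l*) with (L*,l*) ⊨ᵃ γ for every γ ∈ Γ. -/
import Mathlib


/-- A mixed transition system over event set `Act` with state set `σ`:
two transition relations `Ra` (asserted/must) and `Rc` (consistent/may). -/
structure MTS (Act σ : Type) where
  Ra : σ → Act → σ → Prop
  Rc : σ → Act → σ → Prop

namespace MTS

/-- `M` is a modal transition system iff `Ra ⊆ Rc`. -/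
def IsModal {Act σ : Type} (M : MTS Act σ) : Prop :=
  ∀ s α t, M.Ra s α t → M.Rc s α t

/-- `M` is image-finite. -/
def ImageFinite {Act σ : Type} (M : MTS Act σ) : Prop :=
  ∀ (s : σ) (α : Act), {t | M.Ra s α t}.Finite ∧ {t | M.Rc s α t}.Finite

end MTS

/-- A labelled transition system viewed as a mixed transition system `(Σ, R, R)`. -/
def LTS {Act σ : Type} (R : σ → Act → σ → Prop) : MTS Act σ := ⟨R, R⟩

/-- `Q` is a refinement from `M` to `N`. -/
def IsRefinement {Act σ τ : Type} (M : MTS Act σ) (N : MTS Act τ) (Q : σ → τ → Prop) : Prop :=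
  ∀ s t, Q s t → ∀ α : Act,
    (∀ s', M.Ra s α s' → ∃ t', N.Ra t α t' ∧ Q s' t') ∧
    (∀ t', N.Rc t α t' → ∃ s', M.Rc s α s' ∧ Q s' t')

/-- `(M,i) ⪯ (N,j)`: the pointed system `(N,j)` refines `(M,i)`. -/
def Refines {Act σ τ : Type} (M : MTS Act σ) (i : σ) (N : MTS Act τ) (j : τ) : Prop :=
  ∃ Q, IsRefinement M N Q ∧ Q i j

/-- Modes for the two judgments of the semantics: `a` (asserted), `c` (consistent). -/
inductive RMode where
  | a | c

/-- The dual mode: `¬a = c` and `¬c = a`. -/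
def RMode.negm : RMode → RMode
  | .a => .c
  | .c => .a

/-- The transition relation of mode `m`. -/
def MTS.R {Act σ : Type} (M : MTS Act σ) : RMode → σ → Act → σ → Prop
  | .a => M.Ra
  | .c => M.Rc

/-- Formulas of Hennessy–Milner logic over `Act`. -/
inductive HML (Act : Type) where
  | tt
  | neg (φ : HML Act)
  | dia (α : Act) (φ : HML Act)
  | and (φ ψ : HML Act)

/-- Larsen's semantics of Hennessy–Milner logic with two judgments `⊨ᵃ`, `⊨ᶜ`. -/
def Sat {Act σ : Type} (M : MTS Act σ) : HML Act → RMode → σ → Prop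
  | .tt, _, _ => True
  | .neg φ, m, s => ¬ Sat M φ m.negm s
  | .dia α φ, m, s => ∃ s', M.R m s α s' ∧ Sat M φ m s'
  | .and φ ψ, m, s => Sat M φ m s ∧ Sat M ψ m s

namespace HML

/-- `[α]φ = ¬⟨α⟩¬φ`. -/
def box {Act : Type} (α : Act) (φ : HML Act) : HML Act := .neg (.dia α (.neg φ))

/-- `φ ∨ ψ = ¬(¬φ ∧ ¬ψ)`. -/
def orf {Act : Type} (φ ψ : HML Act) : HML Act := .neg (.and (.neg φ) (.neg ψ))

/-- Finite conjunction (empty conjunction is `tt`). -/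
def bigAnd {Act : Type} : List (HML Act) → HML Act
  | [] => .tt
  | φ :: l => .and φ (bigAnd l)

/-- Finite disjunction (empty disjunction is `¬tt`). -/
def bigOr {Act : Type} : List (HML Act) → HML Act
  | [] => .neg .tt
  | φ :: l => orf φ (bigOr l)

/-- Modal depth of an HML formula. -/
def depth {Act : Type} : HML Act → ℕ
  | .tt => 0
  | .neg φ => φ.depth
  | .dia _ φ => 1 + φ.depth
  | .and φ ψ => max φ.depth ψ.depth

end HML

/-- Terms of the process algebra MPA. -/
inductive MPA (Act : Type) where
  | zero
  | bot
  | prefMust (α : Act) (p : MPA Act)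
  | prefMay (α : Act) (p : MPA Act)
  | plus (p q : MPA Act)

namespace MPA

variable {Act : Type} [DecidableEq Act]

/-- Must-successors of an MPA term for event `β` (structural operational semantics). -/
def must : MPA Act → Act → List (MPA Act)
  | .zero, _ => []
  | .bot, _ => []
  | .prefMust α p, β => if β = α then [p] else []
  | .prefMay _ _, _ => []
  | .plus p q, β => p.must β ++ q.must β

/-- All (must or may) successors of an MPA term for event `β`. -/
def may : MPA Act → Act → List (MPA Act)
  | .zero, _ => []
  | .bot, _ => [.bot]
  | .prefMust α p, β => if β = α then [p] else []
  | .prefMay α p, β => if β = α then [p] else []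
  | .plus p q, β => p.may β ++ q.may β

/-- The modal transition system `⟦·⟧` given by the structural operational semantics of MPA:
`Ra` is the set of must-transitions, `Rc` the set of all transitions. -/
def mts : MTS Act (MPA Act) :=
  ⟨fun p α q => q ∈ p.must α, fun p α q => q ∈ p.may α⟩

theorem sizeOf_lt_of_mem_must :
    ∀ (t : MPA Act) (α : Act) (r : MPA Act), r ∈ t.must α → sizeOf r < sizeOf t := by
  intro t
  induction t with
  | zero => intro α r h; simp [must] at h
  | bot => intro α r h; simp [must] at h
  | prefMust β p ih =>
      intro α r h
      simp only [must] at h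
      split at h <;> simp_all
  | prefMay β p ih => intro α r h; simp [must] at h
  | plus p q ihp ihq =>
      intro α r h
      simp only [must, List.mem_append] at h
      rcases h with h | h
      · have := ihp α r h; simp; omega
      · have := ihq α r h; simp; omega

theorem sizeOf_le_of_mem_may :
    ∀ (t : MPA Act) (α : Act) (r : MPA Act), r ∈ t.may α → sizeOf r ≤ sizeOf t := by
  intro t
  induction t with
  | zero => intro α r h; simp [may] at h
  | bot => intro α r h; simp [may] at h; simp [h]
  | prefMust β p ih =>
      intro α r h
      simp only [may] at h
      split at h <;> simp_all
  | prefMay β p ih =>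
      intro α r h
      simp only [may] at h
      split at h <;> simp_all
  | plus p q ihp ihq =>
      intro α r h
      simp only [may, List.mem_append] at h
      rcases h with h | h
      · have := ihp α r h; simp; omega
      · have := ihq α r h; simp; omega

theorem sizeOf_lt_plus_of_mem_may (p q : MPA Act) (α : Act) (r : MPA Act)
    (h : r ∈ (MPA.plus p q).may α) : sizeOf r < sizeOf (MPA.plus p q) := by
  simp only [may, List.mem_append] at h
  rcases h with h | h
  · have := sizeOf_le_of_mem_may p α r h; simp; omega
  · have := sizeOf_le_of_mem_may q α r h; simp; omega

end MPA

/-- The characteristic Hennessy–Milner formula `φ_p` of an MPA term `p`. -/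
noncomputable def charForm {Act : Type} [Fintype Act] [DecidableEq Act] : MPA Act → HML Act
  | .zero =>
      .bigAnd (((Finset.univ : Finset Act).toList).map fun α => .neg (.dia α .tt))
  | .bot => .tt
  | .prefMust α p =>
      .and (.dia α (charForm p)) (.and (HML.box α (charForm p))
        (.bigAnd ((((Finset.univ : Finset Act).toList).filter (fun β => β ≠ α)).map
          fun β => .neg (.dia β .tt))))
  | .prefMay α p =>
      .and (HML.box α (charForm p))
        (.bigAnd ((((Finset.univ : Finset Act).toList).filter (fun β => β ≠ α)).map
          fun β => .neg (.dia β .tt)))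
  | .plus p q =>
      .and
        (.bigAnd (((Finset.univ : Finset Act).toList).flatMap fun α =>
          ((MPA.plus p q).must α).attach.map fun r => HML.dia α (charForm r.1)))
        (.bigAnd (((Finset.univ : Finset Act).toList).map fun α =>
          HML.box α (.bigOr (((MPA.plus p q).may α).attach.map fun r => charForm r.1))))
decreasing_by
  all_goals first
    | exact MPA.sizeOf_lt_of_mem_must _ _ _ r.2
    | exact MPA.sizeOf_lt_plus_of_mem_may _ _ _ _ r.2
    | (simp; omega)
    | simp

/-- The formula `ψ_{w,α,p} = [δ₁]…[δₙ](⟨α⟩φ_p ∨ ¬⟨α⟩φ_p)`; the set `Φ` consists of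
all such formulas. -/
noncomputable def psiForm {Act : Type} [Fintype Act] [DecidableEq Act]
    (w : List Act) (α : Act) (p : MPA Act) : HML Act :=
  w.foldr (fun δ φ => HML.box δ φ)
    (HML.orf (.dia α (charForm p)) (.neg (.dia α (charForm p))))

/-- `Rᶜ`-reachability in a mixed transition system. -/
def MTS.ReachC {Act σ : Type} (M : MTS Act σ) : σ → σ → Prop :=
  Relation.ReflTransGen (fun s t => ∃ α, M.Rc s α t)
section CompactnessAux

open Classical

variable {Act : Type}

private lemma lts_R_eq {T : Type} (R : T → Act → T → Prop) (m : RMode) :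
    (LTS R).R m = R := by cases m <;> rfl

private lemma sat_mode {T : Type} (R : T → Act → T → Prop) :
    ∀ (φ : HML Act) (m m' : RMode) (s : T), Sat (LTS R) φ m s → Sat (LTS R) φ m' s := by
  intro φ
  induction φ with
  | tt => intro _ _ _ _; trivial
  | neg φ ih => intro m m' s hs hc; exact hs (ih _ _ _ hc)
  | dia α φ ih =>
      intro m m' s hs
      obtain ⟨s', hR, hφ⟩ := hs
      rw [lts_R_eq] at hR
      exact ⟨s', by rw [lts_R_eq]; exact hR, ih _ _ _ hφ⟩
  | and φ ψ ihφ ihψ => intro m m' s hs; exact ⟨ihφ _ _ _ hs.1, ihψ _ _ _ hs.2⟩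

private lemma sat_neg_iff {T : Type} (R : T → Act → T → Prop) (φ : HML Act) (s : T) :
    Sat (LTS R) (.neg φ) .a s ↔ ¬ Sat (LTS R) φ .a s := by
  constructor
  · intro hs hc; exact hs (sat_mode R φ .a _ s hc)
  · intro hs hc; exact hs (sat_mode R φ _ .a s hc)

private lemma sat_dia_iff {T : Type} (R : T → Act → T → Prop) (α : Act) (φ : HML Act) (s : T) :
    Sat (LTS R) (.dia α φ) .a s ↔ ∃ s', R s α s' ∧ Sat (LTS R) φ .a s' := Iff.rfl

private lemma sat_box_iff {T : Type} (R : T → Act → T → Prop) (α : Act) (φ : HML Act) (s : T) :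
    Sat (LTS R) (HML.box α φ) .a s ↔ ∀ s', R s α s' → Sat (LTS R) φ .a s' := by
  unfold HML.box
  rw [sat_neg_iff]
  constructor
  · intro hs s' hR
    by_contra hc
    exact hs ⟨s', hR, (sat_neg_iff R φ s').2 hc⟩
  · rintro hs ⟨s', hR, hφ⟩
    rw [lts_R_eq] at hR
    exact (sat_neg_iff R φ s').1 hφ (hs s' hR)

/-- `S` is finitely satisfiable. -/
private def FinSat (S : Set (HML Act)) : Prop :=
  ∀ Δ : Finset (HML Act), ↑Δ ⊆ S →
    ∃ (T : Type) (R : T → Act → T → Prop) (l : T), ∀ δ ∈ Δ, Sat (LTS R) δ .a l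

/-- Maximal finitely satisfiable set. -/
private def MCS (S : Set (HML Act)) : Prop :=
  FinSat S ∧ ∀ φ : HML Act, φ ∈ S ∨ HML.neg φ ∈ S

private lemma mcs_closed {S : Set (HML Act)} (hS : MCS S) (Δ : Finset (HML Act))
    (hΔ : ↑Δ ⊆ S) (φ : HML Act)
    (hent : ∀ (T : Type) (R : T → Act → T → Prop) (l : T),
      (∀ δ ∈ Δ, Sat (LTS R) δ .a l) → Sat (LTS R) φ .a l) : φ ∈ S := by
  rcases hS.2 φ with hmem | hneg
  · exact hmem
  by_contra hc
  have hsub : ↑(insert (HML.neg φ) Δ) ⊆ S := by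
    intro x hx
    simp only [Finset.coe_insert, Set.mem_insert_iff] at hx
    rcases hx with rfl | hx
    · exact hneg
    · exact hΔ hx
  obtain ⟨T, R, l, hl⟩ := hS.1 _ hsub
  have hφ : Sat (LTS R) φ .a l :=
    hent T R l (fun δ hδ => hl δ (Finset.mem_insert_of_mem hδ))
  have hnφ := hl (HML.neg φ) (Finset.mem_insert_self _ _)
  exact (sat_neg_iff R φ l).1 hnφ hφ

private lemma mcs_not_neg {S : Set (HML Act)} (hS : MCS S) {φ : HML Act}
    (hφ : φ ∈ S) (hnφ : HML.neg φ ∈ S) : False := by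
  have hsub : ↑({φ, HML.neg φ} : Finset (HML Act)) ⊆ S := by
    intro x hx
    simp only [Finset.coe_insert, Set.mem_insert_iff, Finset.coe_singleton,
      Set.mem_singleton_iff] at hx
    rcases hx with rfl | rfl <;> assumption
  obtain ⟨T, R, l, hl⟩ := hS.1 _ hsub
  have h1 := hl φ (by simp)
  have h2 := hl (HML.neg φ) (by simp)
  exact (sat_neg_iff R φ l).1 h2 h1

private lemma mcs_neg_iff {S : Set (HML Act)} (hS : MCS S) (φ : HML Act) :
    HML.neg φ ∈ S ↔ φ ∉ S := by
  constructor
  · intro hn hm; exact mcs_not_neg hS hm hn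
  · intro hn; rcases hS.2 φ with h | h
    · exact absurd h hn
    · exact h

/-- A finite set contained in the union of a nonempty chain is contained in a member. -/
private lemma finset_subset_chain_mem {c : Set (Set (HML Act))}
    (hc : IsChain (· ⊆ ·) c) (hne : c.Nonempty) (Δ : Finset (HML Act))
    (hΔ : ↑Δ ⊆ ⋃₀ c) : ∃ s ∈ c, ↑Δ ⊆ s := by
  classical
  induction Δ using Finset.induction with
  | empty => exact ⟨hne.choose, hne.choose_spec, by simp⟩
  | @insert a Δ ha ih =>
      have hsub : ↑Δ ⊆ ⋃₀ c := by
        intro x hx; exact hΔ (by simp [hx])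
      obtain ⟨s, hs, hΔs⟩ := ih hsub
      have hac : a ∈ ⋃₀ c := hΔ (by simp)
      obtain ⟨t, htc, hat⟩ := hac
      rcases eq_or_ne s t with rfl | hst
      · exact ⟨s, hs, by intro x hx; rcases Finset.mem_insert.1 (by exact_mod_cast hx) with rfl | hx
                         exacts [hat, hΔs hx]⟩
      rcases hc hs htc hst with hsub' | hsub'
      · refine ⟨t, htc, ?_⟩
        intro x hx
        rcases Finset.mem_insert.1 (by exact_mod_cast hx) with rfl | hx
        exacts [hat, hsub' (hΔs hx)]
      · refine ⟨s, hs, ?_⟩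
        intro x hx
        rcases Finset.mem_insert.1 (by exact_mod_cast hx) with rfl | hx
        exacts [hsub' hat, hΔs hx]

/-- Lindenbaum lemma: every finitely satisfiable set extends to a maximal one. -/
private lemma lindenbaum {S : Set (HML Act)} (hS : FinSat S) :
    ∃ M : Set (HML Act), S ⊆ M ∧ MCS M := by
  classical
  have hzorn : ∀ c ⊆ {X : Set (HML Act) | FinSat X}, IsChain (· ⊆ ·) c → c.Nonempty →
      ∃ ub ∈ {X : Set (HML Act) | FinSat X}, ∀ s ∈ c, s ⊆ ub := by
    intro c hcS hchain hcne
    refine ⟨⋃₀ c, ?_, fun s hs => Set.subset_sUnion_of_mem hs⟩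
    intro Δ hΔ
    obtain ⟨s, hsc, hΔs⟩ := finset_subset_chain_mem hchain hcne Δ hΔ
    exact hcS hsc _ hΔs
  obtain ⟨M, hSM, hMmax⟩ := zorn_subset_nonempty {X : Set (HML Act) | FinSat X} hzorn S hS
  · refine ⟨M, hSM, hMmax.1, ?_⟩
    intro φ
    by_contra hc
    push_neg at hc
    obtain ⟨hφ, hnφ⟩ := hc
    -- one of insert φ M, insert (¬φ) M is finitely satisfiable
    by_cases h1 : FinSat (insert φ M)
    · exact hφ (hMmax.2 h1 (Set.subset_insert _ _) (Set.mem_insert _ _))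
    by_cases h2 : FinSat (insert (HML.neg φ) M)
    · exact hnφ (hMmax.2 h2 (Set.subset_insert _ _) (Set.mem_insert _ _))
    unfold FinSat at h1 h2
    push_neg at h1 h2
    obtain ⟨Δ1, hΔ1, hns1⟩ := h1
    obtain ⟨Δ2, hΔ2, hns2⟩ := h2
    have hsub : ↑(Δ1.erase φ ∪ Δ2.erase (HML.neg φ)) ⊆ M := by
      intro x hx
      simp only [Finset.coe_union, Set.mem_union, Finset.coe_erase, Set.mem_diff,
        Finset.mem_coe, Set.mem_singleton_iff] at hx
      rcases hx with ⟨hx1, hx2⟩ | ⟨hx1, hx2⟩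
      · rcases hΔ1 hx1 with h | h; · exact absurd h hx2
        exact h
      · rcases hΔ2 hx1 with h | h; · exact absurd h hx2
        exact h
    obtain ⟨T, R, l, hl⟩ := hMmax.1 _ hsub
    by_cases hφl : Sat (LTS R) φ .a l
    · obtain ⟨δ, hδ, hn⟩ := hns1 T R l
      refine hn ?_
      rcases eq_or_ne δ φ with rfl | hδφ
      · exact hφl
      · exact hl δ (Finset.mem_union_left _ (Finset.mem_erase.2 ⟨hδφ, hδ⟩))
    · obtain ⟨δ, hδ, hn⟩ := hns2 T R l
      refine hn ?_
      rcases eq_or_ne δ (HML.neg φ) with rfl | hδφ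
      · exact (sat_neg_iff R φ l).2 hφl
      · exact hl δ (Finset.mem_union_right _ (Finset.mem_erase.2 ⟨hδφ, hδ⟩))

/-- The canonical transition relation on maximal finitely satisfiable sets. -/
private def canonR : {S : Set (HML Act) // MCS S} → Act → {S : Set (HML Act) // MCS S} → Prop :=
  fun S α S' => ∀ ψ : HML Act, HML.box α ψ ∈ S.1 → ψ ∈ S'.1

/-- Truth lemma for the canonical model. -/
private lemma truth_lemma :
    ∀ (φ : HML Act) (S : {S : Set (HML Act) // MCS S}),
      Sat (LTS (canonR (Act := Act))) φ .a S ↔ φ ∈ S.1 := by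
  intro φ
  induction φ with
  | tt =>
      intro S
      simp only [Sat, true_iff]
      exact mcs_closed S.2 ∅ (by simp) _ (fun T R l _ => trivial)
  | neg φ ih =>
      intro S
      rw [sat_neg_iff, ih S, mcs_neg_iff S.2]
  | dia α φ ih =>
      intro S
      rw [sat_dia_iff]
      constructor
      · rintro ⟨S', hR, hφ⟩
        have hφS' : φ ∈ S'.1 := (ih S').1 hφ
        by_contra hc
        have hnd : HML.neg (HML.dia α φ) ∈ S.1 := (mcs_neg_iff S.2 _).2 hc
        -- then [α]¬φ ∈ S
        have hbox : HML.box α (HML.neg φ) ∈ S.1 := by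
          refine mcs_closed S.2 {HML.neg (HML.dia α φ)} (by simpa using hnd) _ ?_
          intro T R l hl
          have h1 := hl _ (Finset.mem_singleton_self _)
          rw [sat_neg_iff] at h1
          rw [sat_box_iff]
          intro s' hR' 
          rw [sat_neg_iff]
          intro hc'
          exact h1 ((sat_dia_iff R α φ l).2 ⟨s', hR', hc'⟩)
        have := hR _ hbox
        exact mcs_not_neg S'.2 hφS' this
      · intro hd
        -- build a successor MCS
        have hfin : FinSat ({φ} ∪ {ψ | HML.box α ψ ∈ S.1}) := by
          intro Δ hΔ
          classical
          set Δ' : Finset (HML Act) :=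
            insert (HML.dia α φ) ((Δ.filter (fun ψ => HML.box α ψ ∈ S.1)).image (HML.box α))
            with hΔ'def
          have hΔ'S : ↑Δ' ⊆ S.1 := by
            intro x hx
            simp only [hΔ'def, Finset.coe_insert, Set.mem_insert_iff, Finset.coe_image,
              Set.mem_image, Finset.mem_coe, Finset.mem_filter] at hx
            rcases hx with rfl | ⟨ψ, ⟨_, hψ⟩, rfl⟩
            · exact hd
            · exact hψ
          obtain ⟨T, R, l, hl⟩ := S.2.1 _ hΔ'S
          have hdia := hl _ (Finset.mem_insert_self _ _)
          rw [sat_dia_iff] at hdia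
          obtain ⟨l', hRl, hφl⟩ := hdia
          refine ⟨T, R, l', fun δ hδ => ?_⟩
          rcases hΔ hδ with hδφ | hδψ
          · rw [Set.mem_singleton_iff] at hδφ; subst hδφ; exact hφl
          · have hb : HML.box α δ ∈ Δ' := by
              simp only [hΔ'def, Finset.mem_insert, Finset.mem_image, Finset.mem_filter]
              exact Or.inr ⟨δ, ⟨hδ, hδψ⟩, rfl⟩
            have := hl _ hb
            rw [sat_box_iff] at this
            exact this l' hRl
        obtain ⟨M, hM, hMmcs⟩ := lindenbaum hfin
        refine ⟨⟨M, hMmcs⟩, ?_, ?_⟩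
        · intro ψ hψ
          exact hM (Or.inr hψ)
        · exact (ih ⟨M, hMmcs⟩).2 (hM (Or.inl rfl))
  | and φ ψ ihφ ihψ =>
      intro S
      constructor
      · rintro ⟨h1, h2⟩
        refine mcs_closed S.2 {φ, ψ} ?_ _ ?_
        · intro x hx
          simp only [Finset.coe_insert, Set.mem_insert_iff, Finset.coe_singleton,
            Set.mem_singleton_iff] at hx
          rcases hx with rfl | rfl
          exacts [(ihφ S).1 h1, (ihψ S).1 h2]
        · intro T R l hl
          exact ⟨hl φ (by simp), hl ψ (by simp)⟩
      · intro hand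
        constructor
        · refine (ihφ S).2 (mcs_closed S.2 {HML.and φ ψ} (by simpa using hand) _ ?_)
          intro T R l hl
          exact (hl _ (Finset.mem_singleton_self _)).1
        · refine (ihψ S).2 (mcs_closed S.2 {HML.and φ ψ} (by simpa using hand) _ ?_)
          intro T R l hl
          exact (hl _ (Finset.mem_singleton_self _)).2

end CompactnessAux

/-- Compactness for Hennessy–Milner logic: if every finite subset of
`Γ` is satisfiable by a pointed labelled transition system, then so is `Γ`. -/
theorem compactness_HML {Act : Type} [Fintype Act] (Γ : Set (HML Act))
    (h : ∀ Δ : Finset (HML Act), ↑Δ ⊆ Γ →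
      ∃ (T : Type) (R : T → Act → T → Prop) (l : T), ∀ δ ∈ Δ, Sat (LTS R) δ .a l) :
    ∃ (T : Type) (R : T → Act → T → Prop) (l : T), ∀ γ ∈ Γ, Sat (LTS R) γ .a l := by
  obtain ⟨M, hΓM, hMmcs⟩ := lindenbaum (fun Δ hΔ => h Δ hΔ)
  exact ⟨_, canonR, ⟨M, hMmcs⟩, fun γ hγ => (truth_lemma γ ⟨M, hMmcs⟩).2 (hΓM hγ)⟩
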